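/- arXiv:2403.00968 — 4 statements merged into one kernel-verified Lean document; each statement's English description precedes it below -/
import Mathlib

section
/- Let Θ ⊆ ℝ^d, let π₀ be a (prior) probability measure on Θ, and fix data y. Let h(y,·): Θ → ℝ, let g(·,y;·): Z × Θ → ℝ be a loss function over a nonempty set Z, and let g†(·,y;·): E × Θ → ℝ be a dual function on a nonempty feasible set E satisfying weak duality: g†(α,y;λ) ≤ inf_{ζ∈Z} g(ζ,y;λ) for every α ∈ E and every λ ∈ Θ. Assume λ ↦ exp{−h(y,λ)} exp{−inf_{ζ} g(ζ,y;λ)} is measurable. If there exists α̃ ∈ E such that ∫_Θ exp{−h(y,λ)} exp{−g†(α̃,y;λ)} π₀(dλ) < ∞, then ∫_Θ exp{−h(y,λ)} exp{−inf_{ζ} g(ζ,y;λ)} π₀(dλ) < ∞; that is, the bridged posterior density kernel λ ↦ exp{−h(y,λ)−inf_ζ g(ζ,y;λ)} π₀(λ) is integrable and the bridged posterior is proper. -/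
open MeasureTheory Real

/-- Theorem 1, duality bound for posterior propriety.
If a dual function `gd` satisfies weak duality `gd α λ ≤ inf_ζ g ζ λ` on the
parameter set `Θ`, and for some feasible dual point `αt` the envelope
`λ ↦ exp(-h λ) exp(-gd αt λ)` is integrable over `Θ` with respect to the prior `π₀`,
then the bridged posterior kernel `λ ↦ exp(-h λ) exp(-inf_ζ g ζ λ)` is integrable
over `Θ`, i.e. the bridged posterior is proper. -/
theorem bridged_posterior_propriety
    {d : ℕ} {Z E : Type*} [Nonempty Z] [Nonempty E]
    (Θ : Set (Fin d → ℝ)) (π₀ : Measure (Fin d → ℝ)) [IsProbabilityMeasure π₀]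
    (h : (Fin d → ℝ) → ℝ) (g : Z → (Fin d → ℝ) → ℝ) (gd : E → (Fin d → ℝ) → ℝ)
    (weak_duality : ∀ α : E, ∀ lam ∈ Θ, gd α lam ≤ ⨅ ζ : Z, g ζ lam)
    (hmeas : AEStronglyMeasurable
      (fun lam => Real.exp (-h lam) * Real.exp (-(⨅ ζ : Z, g ζ lam))) (π₀.restrict Θ))
    (hint : ∃ αt : E,
      IntegrableOn (fun lam => Real.exp (-h lam) * Real.exp (-gd αt lam)) Θ π₀) :
    IntegrableOn (fun lam => Real.exp (-h lam) * Real.exp (-(⨅ ζ : Z, g ζ lam))) Θ π₀ := by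
  obtain ⟨αt, hαt⟩ := hint
  refine Integrable.mono' hαt hmeas ?_
  have hnm : NullMeasurableSet
      {lam | ‖Real.exp (-h lam) * Real.exp (-(⨅ ζ : Z, g ζ lam))‖ ≤
        Real.exp (-h lam) * Real.exp (-gd αt lam)} (π₀.restrict Θ) :=
    nullMeasurableSet_le hmeas.norm.aemeasurable hαt.1.aemeasurable
  rw [ae_restrict_iff₀ hnm]
  filter_upwards with lam hlam
  have hle : gd αt lam ≤ ⨅ ζ : Z, g ζ lam := weak_duality αt lam hlam
  rw [norm_mul, Real.norm_eq_abs, Real.norm_eq_abs, abs_of_pos (Real.exp_pos _),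
    abs_of_pos (Real.exp_pos _)]
  exact mul_le_mul_of_nonneg_left (Real.exp_le_exp.2 (neg_le_neg hle)) (Real.exp_pos _).le
end

section
/- Let l: U × ℝ^p → ℝ have continuous second derivatives on an open set U × W ⊆ ℝ^d × ℝ^p, let λ₀ ∈ U, let ẑ: U → ℝ^p be twice differentiable with ẑ(λ₀) ∈ W, and suppose the first-order condition ∂l(λ,ζ)/∂ζ |_{ζ=ẑ(λ)} = 0 holds for all λ ∈ U. If the full Hessian −l''(λ₀, ẑ(λ₀)) (a (d+p)×(d+p) matrix of second derivatives in (λ,ζ)) is positive definite, then the profiled function l̂(λ) = l(λ, ẑ(λ)) satisfies l̂''(λ₀) = [I_d ẑ'(λ₀)⊤] l''(λ₀, ẑ(λ₀)) [I_d ; ẑ'(λ₀)], and −l̂''(λ₀) is positive definite. -/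
/-- profile Hessian as a congruence transform; positive definiteness.
If `l` is C² on the open set `U × W`, `ẑ` is twice differentiable with the first-order
condition `∂l/∂ζ (λ, ẑ(λ)) = 0` on `U`, and the negative full Hessian of `l` at
`(lam₀, ẑ(lam₀))` is positive definite, then the Hessian bilinear form of the profiled
function `l̂(λ) = l(λ, ẑ(λ))` at `lam₀` equals the full Hessian evaluated along the
directions `(u, ẑ'(lam₀)u)`, and `-l̂''(lam₀)` is positive definite. -/
theorem profile_hessian_congruence_posDef {d p : ℕ}
    (U : Set (Fin d → ℝ)) (W : Set (Fin p → ℝ)) (hU : IsOpen U) (hW : IsOpen W)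
    (l : (Fin d → ℝ) → (Fin p → ℝ) → ℝ)
    (hl : ContDiffOn ℝ 2 (fun q : (Fin d → ℝ) × (Fin p → ℝ) => l q.1 q.2) (U ×ˢ W))
    (lam₀ : Fin d → ℝ) (hlam₀ : lam₀ ∈ U)
    (zhat : (Fin d → ℝ) → (Fin p → ℝ)) (hzW : zhat lam₀ ∈ W)
    (hz1 : DifferentiableOn ℝ zhat U)
    (hz2 : DifferentiableOn ℝ (fderiv ℝ zhat) U)
    (hstat : ∀ lam ∈ U, fderiv ℝ (l lam) (zhat lam) = 0)
    (hPD : ∀ w : (Fin d → ℝ) × (Fin p → ℝ), w ≠ 0 →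
      fderiv ℝ (fun q => fderiv ℝ (fun q' : (Fin d → ℝ) × (Fin p → ℝ) => l q'.1 q'.2) q w)
        (lam₀, zhat lam₀) w < 0) :
    (∀ u v : Fin d → ℝ,
      fderiv ℝ (fun t => fderiv ℝ (fun s => l s (zhat s)) t v) lam₀ u =
        fderiv ℝ (fun q => fderiv ℝ (fun q' : (Fin d → ℝ) × (Fin p → ℝ) => l q'.1 q'.2) q
            (v, fderiv ℝ zhat lam₀ v)) (lam₀, zhat lam₀) (u, fderiv ℝ zhat lam₀ u)) ∧
    (∀ u : Fin d → ℝ, u ≠ 0 →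
      fderiv ℝ (fun t => fderiv ℝ (fun s => l s (zhat s)) t u) lam₀ u < 0) := by
  classical
  set L : ((Fin d → ℝ) × (Fin p → ℝ)) → ℝ := fun q => l q.1 q.2 with hLdef
  set p0 : (Fin d → ℝ) × (Fin p → ℝ) := (lam₀, zhat lam₀) with hp0def
  have hS : IsOpen (U ×ˢ W) := hU.prod hW
  have hp0 : p0 ∈ U ×ˢ W := ⟨hlam₀, hzW⟩
  -- V : open neighbourhood of lam₀ where zhat t ∈ W
  set V : Set (Fin d → ℝ) := U ∩ zhat ⁻¹' W with hVdef
  have hV : IsOpen V := hz1.continuousOn.isOpen_inter_preimage hU hW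
  have hlamV : lam₀ ∈ V := ⟨hlam₀, hzW⟩
  -- differentiability facts
  have hLC2 : ContDiffAt ℝ 2 L p0 := hl.contDiffAt (hS.mem_nhds hp0)
  have hL1 : ContDiffAt ℝ 1 (fderiv ℝ L) p0 := hLC2.fderiv_right (le_refl 2)
  have hLd' : DifferentiableAt ℝ (fderiv ℝ L) p0 := hL1.differentiableAt one_ne_zero
  have hLdiff : ∀ t ∈ V, DifferentiableAt ℝ L (t, zhat t) := fun t ht =>
    (hl.differentiableOn two_ne_zero).differentiableAt (hS.mem_nhds ⟨ht.1, ht.2⟩)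
  have hzd : ∀ t ∈ V, DifferentiableAt ℝ zhat t := fun t ht =>
    hz1.differentiableAt (hU.mem_nhds ht.1)
  have hzd2 : DifferentiableAt ℝ (fderiv ℝ zhat) lam₀ :=
    hz2.differentiableAt (hU.mem_nhds hlam₀)
  -- the inclusion map φ t = (t, zhat t)
  have hφd : ∀ t ∈ V, DifferentiableAt ℝ (fun s => (s, zhat s)) t := fun t ht =>
    differentiableAt_id.prodMk (hzd t ht)
  have hφf : ∀ t ∈ V, fderiv ℝ (fun s => (s, zhat s)) t =
      (ContinuousLinearMap.id ℝ _).prod (fderiv ℝ zhat t) := fun t ht => by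
    have := differentiableAt_id.fderiv_prodMk (hzd t ht)
    simpa [fderiv_id] using this
  -- chain rule identity on V
  have hchain : ∀ v : Fin d → ℝ, ∀ t ∈ V,
      fderiv ℝ (fun s => l s (zhat s)) t v
        = fderiv ℝ L (t, zhat t) (v, fderiv ℝ zhat t v) := by
    intro v t ht
    have hcomp : fderiv ℝ (L ∘ fun s => (s, zhat s)) t =
        (fderiv ℝ L (t, zhat t)).comp (fderiv ℝ (fun s => (s, zhat s)) t) :=
      fderiv_comp t (hLdiff t ht) (hφd t ht)
    have heq : (fun s => l s (zhat s)) = (L ∘ fun s => (s, zhat s)) := rfl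
    rw [heq, hcomp, hφf t ht]
    simp
  -- vanishing of the partial derivative in the second slot (first-order condition)
  have hvan : ∀ m : Fin p → ℝ, fderiv ℝ L p0 (0, m) = 0 := by
    intro m
    have hincl : HasFDerivAt (fun ζ : Fin p → ℝ => ((lam₀, ζ) : _ × _))
        (ContinuousLinearMap.inr ℝ _ _) (zhat lam₀) :=
      hasFDerivAt_prodMk_right lam₀ (zhat lam₀)
    have hcomp : HasFDerivAt (l lam₀)
        ((fderiv ℝ L p0).comp (ContinuousLinearMap.inr ℝ _ _)) (zhat lam₀) :=
      HasFDerivAt.comp _ (hLdiff lam₀ hlamV).hasFDerivAt hincl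
    have h0 : ((fderiv ℝ L p0).comp (ContinuousLinearMap.inr ℝ _ _)) = 0 := by
      rw [← hcomp.fderiv]; exact hstat lam₀ hlam₀
    have := congrArg (fun T : _ →L[ℝ] ℝ => T m) h0
    simpa using this
  -- main congruence identity
  have key : ∀ u v : Fin d → ℝ,
      fderiv ℝ (fun t => fderiv ℝ (fun s => l s (zhat s)) t v) lam₀ u =
        fderiv ℝ (fun q => fderiv ℝ L q (v, fderiv ℝ zhat lam₀ v)) p0
          (u, fderiv ℝ zhat lam₀ u) := by
    intro u v
    have hev : (fun t => fderiv ℝ (fun s => l s (zhat s)) t v)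
        =ᶠ[nhds lam₀] (fun t => (fderiv ℝ L (t, zhat t)) ((v, fderiv ℝ zhat t v) :
          (Fin d → ℝ) × (Fin p → ℝ))) := by
      filter_upwards [hV.mem_nhds hlamV] with t ht
      exact hchain v t ht
    rw [Filter.EventuallyEq.fderiv_eq hev]
    -- the CLM-valued factor A t = fderiv L (t, zhat t)
    have hAd : DifferentiableAt ℝ (fun t => fderiv ℝ L (t, zhat t)) lam₀ :=
      hLd'.comp lam₀ (hφd lam₀ hlamV)
    have hwd : DifferentiableAt ℝ (fun t => ((v, fderiv ℝ zhat t v) :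
        (Fin d → ℝ) × (Fin p → ℝ))) lam₀ :=
      (differentiableAt_const v).prodMk (hzd2.clm_apply (differentiableAt_const v))
    rw [fderiv_clm_apply hAd hwd]
    -- derivative of w has vanishing first component
    have hwf : fderiv ℝ (fun t => ((v, fderiv ℝ zhat t v) :
        (Fin d → ℝ) × (Fin p → ℝ))) lam₀ =
        (0 : _ →L[ℝ] (Fin d → ℝ)).prod
          ((fderiv ℝ (fderiv ℝ zhat) lam₀).flip v) := by
      rw [(differentiableAt_const v).fderiv_prodMk (hzd2.clm_apply (differentiableAt_const v)),
        fderiv_const_apply, fderiv_clm_apply hzd2 (differentiableAt_const v)]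
      simp
    -- derivative of A via the chain rule
    have hAf : fderiv ℝ (fun t => fderiv ℝ L (t, zhat t)) lam₀ =
        (fderiv ℝ (fderiv ℝ L) p0).comp
          ((ContinuousLinearMap.id ℝ _).prod (fderiv ℝ zhat lam₀)) := by
      have h1 : fderiv ℝ ((fderiv ℝ L) ∘ fun s => (s, zhat s)) lam₀ =
          (fderiv ℝ (fderiv ℝ L) p0).comp (fderiv ℝ (fun s => (s, zhat s)) lam₀) :=
        fderiv_comp lam₀ hLd' (hφd lam₀ hlamV)
      rw [hφf lam₀ hlamV] at h1
      exact h1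
    -- RHS as iterated derivative
    have hRHS : fderiv ℝ (fun q => fderiv ℝ L q (v, fderiv ℝ zhat lam₀ v)) p0
          (u, fderiv ℝ zhat lam₀ u) =
        fderiv ℝ (fderiv ℝ L) p0 (u, fderiv ℝ zhat lam₀ u) (v, fderiv ℝ zhat lam₀ v) := by
      rw [fderiv_clm_apply hLd' (differentiableAt_const _)]
      simp
    rw [hRHS]
    simp only [ContinuousLinearMap.add_apply, ContinuousLinearMap.comp_apply,
      ContinuousLinearMap.flip_apply, hwf, hAf]
    simp [hvan]
    exact hvan _
  refine ⟨key, fun u hu => ?_⟩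
  rw [key u u]
  exact hPD (u, fderiv ℝ zhat lam₀ u) (fun h => hu (congrArg Prod.fst h))
end

section
/- Let Θ ⊆ ℝ^d be open with λ₀ ∈ Θ, let H be a real normed vector space with a point ζ₀ ∈ H. Let l_n: Θ × H → ℝ, let ẑ_n: Θ → H satisfy l_n(λ, ẑ_n(λ)) = sup_{ζ∈H} l_n(λ, ζ) for every λ and n, and let ζ̃: Θ × Θ × H → H satisfy ζ̃(λ, λ, ζ) = ζ; define l̂_n(λ) = l_n(λ, ẑ_n(λ)) and l̃_n(t, λ, ζ) = l_n(t, ζ̃(t, λ, ζ)), assumed twice continuously differentiable in t. Suppose there exist: an open neighborhood V ⊆ Θ × Θ × H of (λ₀, λ₀, ζ₀); a symmetric matrix H₀ ∈ ℝ^{d×d}; vectors h_n ∈ ℝ^d; functions m_n: Θ × Θ × H → ℝ^d; sequences a_n, b_n, c_n → 0; and an open neighborhood U ⊆ Θ of λ₀, such that for all n: (i) sup_{(t,λ,ζ)∈V} ‖∂²l̃_n(t,λ,ζ)/∂t² + H₀‖ ≤ a_n; (ii) sup_{(t,λ,ζ)∈V} √n ‖∂l̃_n(t,λ,ζ)/∂t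 − m_n(t,λ,ζ) − h_n‖ ≤ b_n; (iii) ‖m_n(λ₀, λ, ẑ_n(λ))‖ ≤ c_n (‖λ − λ₀‖ + n^{−1/2}) for all λ ∈ U; and (iv) for every neighborhood W of ζ₀ there exist ε' > 0 and N such that ẑ_n(λ) ∈ W whenever n ≥ N and ‖λ − λ₀‖ < ε'. Then there exist ε > 0, N ∈ ℕ, and a sequence d_n → 0 such that for all n ≥ N and all λ with ‖λ − λ₀‖ < ε: |l̂_n(λ) − l̂_n(λ₀) − (λ − λ₀)⊤h_n + (1/2)(λ − λ₀)⊤H₀(λ − λ₀)| ≤ d_n (‖λ − λ₀‖ + n^{−1/2})². -/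
open Filter Topology

lemma taylor_key {d : ℕ} (f : EuclideanSpace ℝ (Fin d) → ℝ) (hf : ContDiff ℝ 2 f)
    (x₀ v : EuclideanSpace ℝ (Fin d)) (Q A : ℝ)
    (hQ : ∀ s ∈ Set.Icc (0:ℝ) 1,
      |fderiv ℝ (fun t => fderiv ℝ f t v) (x₀ + s • v) v + Q| ≤ A) :
    |f (x₀ + v) - f x₀ - fderiv ℝ f x₀ v + Q / 2| ≤ A := by
  have hdiff : Differentiable ℝ f := hf.differentiable two_ne_zero
  have hF : Differentiable ℝ (fun t => fderiv ℝ f t v) := by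
    have h1 : ContDiff ℝ 1 (fderiv ℝ f) := hf.fderiv_right (le_refl 2)
    exact (h1.differentiable one_ne_zero).clm_apply (differentiable_const v)
  have hline : ∀ s : ℝ, HasDerivAt (fun s : ℝ => x₀ + s • v) v s := by
    intro s
    simpa using ((hasDerivAt_id s).smul_const v).const_add x₀
  set φ : ℝ → ℝ := fun s => f (x₀ + s • v) - s * (fderiv ℝ f x₀ v) + s^2/2 * Q with hφdef
  set φ' : ℝ → ℝ := fun s => fderiv ℝ f (x₀ + s • v) v - fderiv ℝ f x₀ v + s * Q with hφ'def
  have hφ' : ∀ s : ℝ, HasDerivAt φ (φ' s) s := by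
    intro s
    have h1 : HasDerivAt (fun s : ℝ => f (x₀ + s • v)) (fderiv ℝ f (x₀ + s • v) v) s :=
      (hdiff _).hasFDerivAt.comp_hasDerivAt s (hline s)
    have h2 : HasDerivAt (fun s : ℝ => s^2/2 * Q) (s * Q) s := by
      have := ((hasDerivAt_pow 2 s).div_const 2).mul_const Q
      exact this.congr_deriv (by rw [show (2:ℕ) - 1 = 1 from rfl]; ring)
    exact
      ((h1.sub ((hasDerivAt_id s).mul_const (fderiv ℝ f x₀ v))).add h2).congr_deriv (by simp [hφ'def])
  have hφ'' : ∀ s : ℝ, HasDerivAt φ'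
      (fderiv ℝ (fun t => fderiv ℝ f t v) (x₀ + s • v) v + Q) s := by
    intro s
    have h1 : HasDerivAt (fun s : ℝ => fderiv ℝ f (x₀ + s • v) v)
        (fderiv ℝ (fun t => fderiv ℝ f t v) (x₀ + s • v) v) s :=
      (hF _).hasFDerivAt.comp_hasDerivAt s (hline s)
    exact (h1.sub_const _).add (hasDerivAt_mul_const Q)
  have hA0 : (0:ℝ) ≤ A := le_trans (abs_nonneg _) (hQ 0 ⟨le_rfl, zero_le_one⟩)
  have hφ'0 : φ' 0 = 0 := by simp [hφ'def]
  have step1 : ∀ s ∈ Set.Icc (0:ℝ) 1, ‖φ' s‖ ≤ A := by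
    intro s hs
    have := Convex.norm_image_sub_le_of_norm_hasDerivWithin_le
      (f := φ') (f' := fun s => fderiv ℝ (fun t => fderiv ℝ f t v) (x₀ + s • v) v + Q)
      (s := Set.Icc (0:ℝ) 1) (C := A)
      (fun x hx => (hφ'' x).hasDerivWithinAt)
      (fun x hx => by simpa [Real.norm_eq_abs] using hQ x hx)
      (convex_Icc (0:ℝ) 1) ⟨le_rfl, zero_le_one⟩ hs
    rw [hφ'0, sub_zero] at this
    calc ‖φ' s‖ ≤ A * ‖s - 0‖ := this
    _ ≤ A * 1 := by
        apply mul_le_mul_of_nonneg_left _ hA0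
        rw [sub_zero, Real.norm_eq_abs, abs_of_nonneg hs.1]
        exact hs.2
    _ = A := mul_one A
  have step2 : ‖φ 1 - φ 0‖ ≤ A * ‖(1:ℝ) - 0‖ :=
    Convex.norm_image_sub_le_of_norm_hasDerivWithin_le
      (fun x hx => (hφ' x).hasDerivWithinAt) step1
      (convex_Icc (0:ℝ) 1) ⟨le_rfl, zero_le_one⟩ ⟨zero_le_one, le_rfl⟩
  have hval : φ 1 - φ 0 = f (x₀ + v) - f x₀ - fderiv ℝ f x₀ v + Q / 2 := by
    simp [hφdef]
    ring
  rw [hval] at step2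
  simpa [Real.norm_eq_abs] using step2

lemma arith_key (A B C x t : ℝ) (h0 : 0 ≤ x) (ht0 : 0 ≤ t) :
    |A| * x * x + B * t * x + C * (x + t) * x ≤ (|A| + |B| + |C|) * (x + t) ^ 2 := by
  have e1 : |A| * x * x ≤ |A| * (x + t) ^ 2 := by
    nlinarith [mul_nonneg (abs_nonneg A) (mul_nonneg h0 ht0),
      mul_nonneg (abs_nonneg A) (mul_nonneg ht0 ht0)]
  have e2a : B * t * x ≤ |B| * (t * x) := by
    have := mul_le_mul_of_nonneg_right (le_abs_self B) (mul_nonneg ht0 h0)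
    nlinarith
  have e2b : |B| * (t * x) ≤ |B| * (x + t) ^ 2 := by
    nlinarith [mul_nonneg (abs_nonneg B) (mul_nonneg h0 h0),
      mul_nonneg (abs_nonneg B) (mul_nonneg ht0 ht0),
      mul_nonneg (abs_nonneg B) (mul_nonneg h0 ht0)]
  have e3a : C * (x + t) * x ≤ |C| * ((x + t) * x) := by
    have := mul_le_mul_of_nonneg_right (le_abs_self C)
      (mul_nonneg (add_nonneg h0 ht0) h0)
    nlinarith
  have e3b : |C| * ((x + t) * x) ≤ |C| * (x + t) ^ 2 := by
    nlinarith [mul_nonneg (abs_nonneg C) (mul_nonneg h0 ht0),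
      mul_nonneg (abs_nonneg C) (mul_nonneg ht0 ht0)]
  nlinarith


set_option maxHeartbeats 1000000 in
/-- deterministic form of Lemma 1: local asymptotic normality of the
profile log-likelihood. Under the approximately-least-favorable-submodel conditions
(i)–(iv), the profile log-likelihood `l̂_n(λ) = l_n(λ, ẑ_n(λ))` admits the quadratic
LAN expansion around `λ₀` with score `h_n` and curvature `H₀`, with remainder
`o(1)(‖λ-λ₀‖ + n^{-1/2})²` uniformly on a neighborhood of `λ₀`. -/
theorem profile_loglikelihood_LAN {d : ℕ} {H : Type*}
    [NormedAddCommGroup H] [NormedSpace ℝ H]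
    (Θ : Set (EuclideanSpace ℝ (Fin d))) (hΘ : IsOpen Θ)
    (lam₀ : EuclideanSpace ℝ (Fin d)) (hlam₀ : lam₀ ∈ Θ) (ζ₀ : H)
    (l : ℕ → EuclideanSpace ℝ (Fin d) → H → ℝ)
    (zhat : ℕ → EuclideanSpace ℝ (Fin d) → H)
    -- ẑ_n(λ) attains the profile supremum
    (hsup : ∀ (n : ℕ) (lam : EuclideanSpace ℝ (Fin d)) (ζ : H),
      l n lam ζ ≤ l n lam (zhat n lam))
    -- submodel map, passing through ζ at t = λ
    (ζt : EuclideanSpace ℝ (Fin d) → EuclideanSpace ℝ (Fin d) → H → H)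
    (hpass : ∀ (lam : EuclideanSpace ℝ (Fin d)) (ζ : H), ζt lam lam ζ = ζ)
    (hsmooth : ∀ (n : ℕ) (lam : EuclideanSpace ℝ (Fin d)) (ζ : H),
      ContDiff ℝ 2 (fun t => l n t (ζt t lam ζ)))
    -- neighborhood V of (λ₀, λ₀, ζ₀)
    (V : Set (EuclideanSpace ℝ (Fin d) × EuclideanSpace ℝ (Fin d) × H))
    (hVopen : IsOpen V) (hVmem : (lam₀, lam₀, ζ₀) ∈ V)
    (H₀ : Matrix (Fin d) (Fin d) ℝ) (hH₀symm : H₀.IsSymm)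
    (h : ℕ → EuclideanSpace ℝ (Fin d))
    (m : ℕ → EuclideanSpace ℝ (Fin d) → EuclideanSpace ℝ (Fin d) → H →
      EuclideanSpace ℝ (Fin d))
    (a b c : ℕ → ℝ)
    (ha : Tendsto a atTop (𝓝 0)) (hb : Tendsto b atTop (𝓝 0))
    (hc : Tendsto c atTop (𝓝 0))
    -- neighborhood U of λ₀
    (U : Set (EuclideanSpace ℝ (Fin d))) (hUopen : IsOpen U) (hUmem : lam₀ ∈ U)
    (hUΘ : U ⊆ Θ)
    -- (i) uniform convergence of the second derivative of the submodel to -H₀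
    (hyp1 : ∀ n : ℕ, ∀ q ∈ V, ∀ u v : EuclideanSpace ℝ (Fin d),
      |fderiv ℝ (fun t => fderiv ℝ (fun t' => l n t' (ζt t' q.2.1 q.2.2)) t v) q.1 u +
          ∑ i, ∑ j, u i * H₀ i j * v j| ≤ a n * ‖u‖ * ‖v‖)
    -- (ii) uniform approximation of the centered score by h_n
    (hyp2 : ∀ n : ℕ, ∀ q ∈ V,
      Real.sqrt n *
          ‖gradient (fun t => l n t (ζt t q.2.1 q.2.2)) q.1 - m n q.1 q.2.1 q.2.2 - h n‖ ≤
        b n)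
    -- (iii) the expected score at t = λ₀ along the profiled path is negligible
    (hyp3 : ∀ n : ℕ, ∀ lam ∈ U,
      ‖m n lam₀ lam (zhat n lam)‖ ≤ c n * (‖lam - lam₀‖ + (Real.sqrt n)⁻¹))
    -- (iv) consistency of ẑ_n(λ) as λ → λ₀ and n → ∞
    (hyp4 : ∀ W ∈ 𝓝 ζ₀, ∃ ε' > (0 : ℝ), ∃ N : ℕ, ∀ n ≥ N,
      ∀ lam : EuclideanSpace ℝ (Fin d), ‖lam - lam₀‖ < ε' → zhat n lam ∈ W) :
    ∃ ε > (0 : ℝ), ∃ N : ℕ, ∃ r : ℕ → ℝ, Tendsto r atTop (𝓝 0) ∧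
      ∀ n ≥ N, ∀ lam : EuclideanSpace ℝ (Fin d), ‖lam - lam₀‖ < ε →
        |l n lam (zhat n lam) - l n lam₀ (zhat n lam₀) -
            (∑ i, (lam i - lam₀ i) * h n i) +
            (1 / 2) * ∑ i, ∑ j, (lam i - lam₀ i) * H₀ i j * (lam j - lam₀ j)| ≤
          r n * (‖lam - lam₀‖ + (Real.sqrt n)⁻¹) ^ 2 := by
  obtain ⟨δ, hδpos, hδ⟩ : ∃ δ > (0:ℝ), ∀ (t lam' : EuclideanSpace ℝ (Fin d)) (z : H),
      dist t lam₀ < δ → dist lam' lam₀ < δ → dist z ζ₀ < δ → (t, lam', z) ∈ V := by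
    obtain ⟨δ, hδpos, hball⟩ := Metric.isOpen_iff.mp hVopen _ hVmem
    refine ⟨δ, hδpos, fun t lam' z h1 h2 h3 => hball ?_⟩
    simp only [Metric.mem_ball, Prod.dist_eq, max_lt_iff]
    exact ⟨h1, h2, h3⟩
  obtain ⟨ε', hε'pos, N₀, hN₀⟩ := hyp4 (Metric.ball ζ₀ δ) (Metric.ball_mem_nhds ζ₀ hδpos)
  obtain ⟨εU, hεUpos, hεU⟩ := Metric.isOpen_iff.mp hUopen lam₀ hUmem
  refine ⟨min δ (min ε' εU), by positivity, max N₀ 1,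
    fun n => |a n| + |b n| + |c n|, ?_, ?_⟩
  · have := (ha.abs.add hb.abs).add hc.abs
    simpa using this
  intro n hn lam hlam
  have hn1 : 1 ≤ n := le_trans (le_max_right _ _) hn
  have hnN₀ : N₀ ≤ n := le_trans (le_max_left _ _) hn
  have hsq : (0:ℝ) < Real.sqrt n := Real.sqrt_pos.mpr (by exact_mod_cast hn1)
  set s : ℝ := (Real.sqrt n)⁻¹ with hs
  have hspos : 0 < s := inv_pos.mpr hsq
  set v : EuclideanSpace ℝ (Fin d) := lam - lam₀ with hv
  have hlamv : lam₀ + v = lam := by rw [hv]; abel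
  have hvδ : ‖v‖ < δ := lt_of_lt_of_le hlam (min_le_left _ _)
  have hvε' : ‖v‖ < ε' := lt_of_lt_of_le hlam (le_trans (min_le_right _ _) (min_le_left _ _))
  have hvεU : ‖v‖ < εU := lt_of_lt_of_le hlam (le_trans (min_le_right _ _) (min_le_right _ _))
  have hlamU : lam ∈ U := hεU (by rwa [Metric.mem_ball, dist_eq_norm])
  set Q : ℝ := ∑ i, ∑ j, v i * H₀ i j * v j with hQdef
  set T : ℝ := ∑ i, v i * h n i with hTdef
  set R : ℝ := (|a n| + |b n| + |c n|) * (‖v‖ + s) ^ 2 with hRdef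
  have hc0 : 0 ≤ c n := by
    have h3 := hyp3 n lam₀ hUmem
    have h4 : (0:ℝ) ≤ c n * (‖lam₀ - lam₀‖ + s) := le_trans (norm_nonneg _) h3
    simp only [sub_self, norm_zero, zero_add] at h4
    nlinarith
  have main : ∀ (p : EuclideanSpace ℝ (Fin d)) (z : H),
      dist p lam₀ < δ → dist z ζ₀ < δ → ‖m n lam₀ p z‖ ≤ c n * (‖v‖ + s) →
      |l n lam (ζt lam p z) - l n lam₀ (ζt lam₀ p z) - T + Q / 2| ≤ R := by
    intro p z hp hz hm
    have hfC : ContDiff ℝ 2 (fun t => l n t (ζt t p z)) := hsmooth n p z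
    have hmemV : ∀ t : EuclideanSpace ℝ (Fin d), dist t lam₀ < δ → (t, p, z) ∈ V :=
      fun t ht => hδ t p z ht hp hz
    have hmem0 : (lam₀, p, z) ∈ V := hmemV lam₀ (by simpa using hδpos)
    set f : EuclideanSpace ℝ (Fin d) → ℝ := fun t => l n t (ζt t p z) with hfdef
    have htay : |f (lam₀ + v) - f lam₀ - fderiv ℝ f lam₀ v + Q / 2|
        ≤ |a n| * ‖v‖ * ‖v‖ := by
      apply taylor_key f hfC lam₀ v Q
      intro s' hs'
      have hmem : (lam₀ + s' • v, p, z) ∈ V := by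
        apply hmemV
        rw [dist_eq_norm, add_sub_cancel_left, norm_smul, Real.norm_eq_abs]
        calc |s'| * ‖v‖ ≤ 1 * ‖v‖ := by
              apply mul_le_mul_of_nonneg_right _ (norm_nonneg _)
              rw [abs_of_nonneg hs'.1]; exact hs'.2
        _ < δ := by rwa [one_mul]
      have h1 := hyp1 n (lam₀ + s' • v, p, z) hmem v v
      simp only at h1
      calc |fderiv ℝ (fun t => fderiv ℝ f t v) (lam₀ + s' • v) v + Q|
          ≤ a n * ‖v‖ * ‖v‖ := h1
      _ ≤ |a n| * ‖v‖ * ‖v‖ :=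
          mul_le_mul_of_nonneg_right
            (mul_le_mul_of_nonneg_right (le_abs_self _) (norm_nonneg v)) (norm_nonneg v)
    have hgrad : fderiv ℝ f lam₀ v = inner ℝ (gradient f lam₀) v := by
      rw [gradient]; exact (InnerProductSpace.toDual_symm_apply).symm
    have herr : ‖gradient f lam₀ - m n lam₀ p z - h n‖ ≤ b n * s := by
      have h2 := hyp2 n (lam₀, p, z) hmem0
      simp only at h2
      calc ‖gradient f lam₀ - m n lam₀ p z - h n‖
          = s * (Real.sqrt n * ‖gradient f lam₀ - m n lam₀ p z - h n‖) := by
            rw [hs]; field_simp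
      _ ≤ s * b n := mul_le_mul_of_nonneg_left h2 (le_of_lt hspos)
      _ = b n * s := mul_comm _ _
    have hdecomp : (inner ℝ (gradient f lam₀) v : ℝ) =
        inner ℝ (gradient f lam₀ - m n lam₀ p z - h n) v + inner ℝ (m n lam₀ p z) v + T := by
      have hTh : (inner ℝ (h n) v : ℝ) = T := by
        rw [hTdef]
        simp only [PiLp.inner_apply, RCLike.inner_apply, conj_trivial]
      rw [← hTh]
      simp only [inner_sub_left]
      ring
    have habs1 : |(inner ℝ (gradient f lam₀ - m n lam₀ p z - h n) v : ℝ)| ≤ b n * s * ‖v‖ := by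
      calc |(inner ℝ (gradient f lam₀ - m n lam₀ p z - h n) v : ℝ)|
          ≤ ‖gradient f lam₀ - m n lam₀ p z - h n‖ * ‖v‖ := abs_real_inner_le_norm _ _
      _ ≤ b n * s * ‖v‖ := mul_le_mul_of_nonneg_right herr (norm_nonneg _)
    have habs2 : |(inner ℝ (m n lam₀ p z) v : ℝ)| ≤ c n * (‖v‖ + s) * ‖v‖ := by
      calc |(inner ℝ (m n lam₀ p z) v : ℝ)| ≤ ‖m n lam₀ p z‖ * ‖v‖ := abs_real_inner_le_norm _ _
      _ ≤ c n * (‖v‖ + s) * ‖v‖ := mul_le_mul_of_nonneg_right hm (norm_nonneg _)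
    have hb' : b n * s ≤ |b n| * s := mul_le_mul_of_nonneg_right (le_abs_self _) hspos.le
    have harith : |a n| * ‖v‖ * ‖v‖ + b n * s * ‖v‖ + c n * (‖v‖ + s) * ‖v‖ ≤ R := by
      rw [hRdef]
      exact arith_key (a n) (b n) (c n) ‖v‖ s (norm_nonneg v) hspos.le
    have heq : f lam - f lam₀ - T + Q / 2 =
        (f (lam₀ + v) - f lam₀ - fderiv ℝ f lam₀ v + Q / 2) +
        (inner ℝ (gradient f lam₀ - m n lam₀ p z - h n) v : ℝ) +
        (inner ℝ (m n lam₀ p z) v : ℝ) := by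
      rw [hlamv, hgrad, hdecomp]; ring
    calc |f lam - f lam₀ - T + Q / 2|
        ≤ |f (lam₀ + v) - f lam₀ - fderiv ℝ f lam₀ v + Q / 2| +
          |(inner ℝ (gradient f lam₀ - m n lam₀ p z - h n) v : ℝ)| +
          |(inner ℝ (m n lam₀ p z) v : ℝ)| := by rw [heq]; exact abs_add_three _ _ _
    _ ≤ |a n| * ‖v‖ * ‖v‖ + b n * s * ‖v‖ + c n * (‖v‖ + s) * ‖v‖ :=
        add_le_add (add_le_add htay habs1) habs2
    _ ≤ R := harith
  -- apply main twice
  have low := main lam₀ (zhat n lam₀) (by simpa using hδpos)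
    (by
      have := hN₀ n hnN₀ lam₀ (by simpa using hε'pos)
      rwa [Metric.mem_ball] at this)
    (by
      have h3 := hyp3 n lam₀ hUmem
      simp only [sub_self, norm_zero, zero_add] at h3
      calc ‖m n lam₀ lam₀ (zhat n lam₀)‖ ≤ c n * s := h3
      _ ≤ c n * (‖v‖ + s) := by nlinarith [norm_nonneg v])
  have upp := main lam (zhat n lam) (by rwa [dist_eq_norm]) (by
      have := hN₀ n hnN₀ lam hvε'
      rwa [Metric.mem_ball] at this)
    (by
      have h3 := hyp3 n lam hlamU
      rwa [← hv] at h3)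
  rw [hpass lam₀ (zhat n lam₀)] at low
  rw [hpass lam (zhat n lam)] at upp
  have hsup1 : l n lam (ζt lam lam₀ (zhat n lam₀)) ≤ l n lam (zhat n lam) := hsup n lam _
  have hsup2 : l n lam₀ (ζt lam₀ lam (zhat n lam)) ≤ l n lam₀ (zhat n lam₀) := hsup n lam₀ _
  have hTeq : ∑ i, (lam i - lam₀ i) * h n i = T := by
    rw [hTdef]
    exact Finset.sum_congr rfl fun i _ => by rw [hv]; simp
  have hQeq : ∑ i, ∑ j, (lam i - lam₀ i) * H₀ i j * (lam j - lam₀ j) = Q := by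
    rw [hQdef]
    refine Finset.sum_congr rfl fun i _ => Finset.sum_congr rfl fun j _ => by rw [hv]; simp
  rw [hTeq, hQeq]
  rw [abs_le] at low upp ⊢
  constructor
  · have : (1:ℝ)/2 * Q = Q / 2 := by ring
    rw [this]
    linarith [low.1]
  · have : (1:ℝ)/2 * Q = Q / 2 := by ring
    rw [this]
    linarith [upp.2]
end

section
/- Fix y ∈ {0,1}^n and distinct points x_1,…,x_n ∈ ℝ^{d̃}. For τ, b > 0 let Q(τ,b) be the symmetric positive definite matrix with entries Q(τ,b)_{ij} = τ exp(−‖x_i − x_j‖²/(2b)), and define the profile likelihood kernel F(τ, b) = sup_{ζ ∈ ℝ^n} exp{−(1/2) ζ⊤Q(τ,b)^{−1}ζ} ∏_{i=1}^n exp(y_i ζ_i)/(1 + exp(ζ_i)). Assume F is measurable. If the prior on (τ,b) is π₀(dτ, db) = c e^{−c₁τ²} dτ ⊗ μ_b(db) for some constant c₁ > 0, normalizing constant c, and any probability measure μ_b on (0,∞), then ∫_0^∞ ∫_0^∞ F(τ,b) π₀(dτ, db) < ∞; that is, the bridged posterior of the latent quadratic exponential model is proper. -/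
open Matrix MeasureTheory

lemma sum_inner_pow_nonneg {n dt : ℕ} (w : Fin n → EuclideanSpace ℝ (Fin dt))
    (d : Fin n → ℝ) (m : ℕ) :
    0 ≤ ∑ i, ∑ j, d i * d j * (inner ℝ (w i) (w j) : ℝ) ^ m := by
  have hinner : ∀ i j : Fin n, (inner ℝ (w i) (w j) : ℝ) = ∑ a, w i a * w j a := by
    intro i j
    simp [PiLp.inner_apply, RCLike.inner_apply, mul_comm]
  have h1 : ∀ i j : Fin n, (inner ℝ (w i) (w j) : ℝ) ^ m
      = ∑ p ∈ Fintype.piFinset (fun _ : Fin m => (Finset.univ : Finset (Fin dt))),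
          (∏ l, w i (p l)) * (∏ l, w j (p l)) := by
    intro i j
    rw [hinner]
    calc (∑ a, w i a * w j a) ^ m = ∏ _l : Fin m, ∑ a, w i a * w j a := by
          simp
      _ = ∑ p ∈ Fintype.piFinset (fun _ : Fin m => (Finset.univ : Finset (Fin dt))),
            ∏ l, (w i (p l) * w j (p l)) := Finset.prod_univ_sum _ _
      _ = _ := by simp [Finset.prod_mul_distrib]
  calc (0:ℝ) ≤ ∑ p ∈ Fintype.piFinset (fun _ : Fin m => (Finset.univ : Finset (Fin dt))),
        (∑ i, d i * ∏ l, w i (p l)) ^ 2 := by positivity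
    _ = ∑ i, ∑ j, d i * d j * (inner ℝ (w i) (w j) : ℝ) ^ m := by
        simp_rw [h1, Finset.mul_sum, sq, Finset.sum_mul_sum]
        rw [Finset.sum_comm]
        refine Finset.sum_congr rfl fun i _ => ?_
        rw [Finset.sum_comm]
        exact Finset.sum_congr rfl fun j _ => Finset.sum_congr rfl fun p _ => by ring

lemma gauss_qf_nonneg {n dt : ℕ} (x : Fin n → EuclideanSpace ℝ (Fin dt)) {b : ℝ} (hb : 0 < b)
    (cv : Fin n → ℝ) :
    0 ≤ ∑ i, ∑ j, cv i * cv j * Real.exp (-‖x i - x j‖ ^ 2 / (2 * b)) := by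
  set w : Fin n → EuclideanSpace ℝ (Fin dt) := fun i => (Real.sqrt b)⁻¹ • x i with hw
  set d : Fin n → ℝ := fun i => cv i * Real.exp (-‖x i‖ ^ 2 / (2 * b)) with hd
  have hinner : ∀ i j : Fin n, (inner ℝ (w i) (w j) : ℝ) = (inner ℝ (x i) (x j) : ℝ) / b := by
    intro i j
    rw [hw]
    simp only [real_inner_smul_left, real_inner_smul_right]
    rw [← mul_assoc, ← mul_inv, Real.mul_self_sqrt hb.le, inv_mul_eq_div]
  have hentry : ∀ i j : Fin n, Real.exp (-‖x i - x j‖ ^ 2 / (2 * b))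
      = Real.exp (-‖x i‖ ^ 2 / (2 * b)) * Real.exp (-‖x j‖ ^ 2 / (2 * b)) *
        Real.exp ((inner ℝ (w i) (w j) : ℝ)) := by
    intro i j
    rw [← Real.exp_add, ← Real.exp_add, Real.exp_eq_exp, hinner, norm_sub_sq_real]
    field_simp
    ring
  have hexp : ∀ t : ℝ, Real.exp t = ∑' k : ℕ, t ^ k / (Nat.factorial k : ℝ) := by
    intro t
    rw [Real.exp_eq_exp_ℝ, NormedSpace.exp_eq_tsum_div]
  have hsummable : ∀ (r s t : ℝ), Summable (fun k : ℕ => r * s * (t ^ k / (Nat.factorial k : ℝ))) :=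
    fun r s t => (Real.summable_pow_div_factorial t).mul_left _
  calc (0:ℝ) ≤ ∑' k : ℕ, (∑ i, ∑ j, d i * d j * (inner ℝ (w i) (w j) : ℝ) ^ k) / (Nat.factorial k : ℝ) := by
        refine tsum_nonneg fun k => div_nonneg (sum_inner_pow_nonneg w d k) (by positivity)
    _ = ∑' k : ℕ, ∑ i, ∑ j, d i * d j * ((inner ℝ (w i) (w j) : ℝ) ^ k / (Nat.factorial k : ℝ)) := by
        refine tsum_congr fun k => ?_
        rw [Finset.sum_div]
        refine Finset.sum_congr rfl fun i _ => ?_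
        rw [Finset.sum_div]
        exact Finset.sum_congr rfl fun j _ => by ring
    _ = ∑ i, ∑ j, ∑' k : ℕ, d i * d j * ((inner ℝ (w i) (w j) : ℝ) ^ k / (Nat.factorial k : ℝ)) := by
        rw [Summable.tsum_finsetSum (fun i _ => summable_sum (fun j _ => hsummable _ _ _))]
        exact Finset.sum_congr rfl fun i _ => Summable.tsum_finsetSum (fun j _ => hsummable _ _ _)
    _ = ∑ i, ∑ j, cv i * cv j * Real.exp (-‖x i - x j‖ ^ 2 / (2 * b)) := by
        refine Finset.sum_congr rfl fun i _ => Finset.sum_congr rfl fun j _ => ?_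
        rw [hentry i j, hexp ((inner ℝ (w i) (w j) : ℝ)), ← tsum_mul_left, ← tsum_mul_left]
        refine tsum_congr fun k => ?_
        simp only [hd]
        ring

/-- propriety of the bridged posterior for the latent quadratic
exponential model. With binary data `y`, distinct locations `x_i`, Gaussian kernel
matrix `Q(τ,b)_{ij} = τ exp(-‖x_i-x_j‖²/(2b))`, profile likelihood kernel `F(τ,b)`,
and prior `c e^{-c₁τ²} dτ ⊗ μ_b`, the bridged posterior is proper: the kernel is
integrable over `(0,∞) × (0,∞)`. -/
theorem latent_quadratic_exponential_propriety {n dt : ℕ}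
    (y : Fin n → ℝ) (hy : ∀ i, y i = 0 ∨ y i = 1)
    (x : Fin n → EuclideanSpace ℝ (Fin dt)) (hx : Function.Injective x)
    (Q : ℝ → ℝ → Matrix (Fin n) (Fin n) ℝ)
    (hQ : ∀ τ b, Q τ b = Matrix.of fun i j => τ * Real.exp (-‖x i - x j‖ ^ 2 / (2 * b)))
    (F : ℝ → ℝ → ℝ)
    (hF : F = fun τ b => ⨆ ζ : Fin n → ℝ,
      Real.exp (-(1 / 2) * (ζ ⬝ᵥ (Q τ b)⁻¹.mulVec ζ)) *
        ∏ i, Real.exp (y i * ζ i) / (1 + Real.exp (ζ i)))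
    (hFmeas : Measurable (Function.uncurry F))
    (c c₁ : ℝ) (hc : 0 < c) (hc₁ : 0 < c₁)
    (hnorm : ∫ τ in Set.Ioi (0 : ℝ), c * Real.exp (-c₁ * τ ^ 2) = 1)
    (μb : Measure ℝ) [IsProbabilityMeasure μb] (hμb : μb (Set.Iic 0) = 0) :
    IntegrableOn (fun q : ℝ × ℝ => F q.1 q.2 * (c * Real.exp (-c₁ * q.1 ^ 2)))
      (Set.Ioi 0 ×ˢ Set.Ioi 0) ((volume : Measure ℝ).prod μb) := by
  -- Step 1: the kernel matrix is positive semidefinite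
  have hQpsd : ∀ τ b : ℝ, 0 < τ → 0 < b → (Q τ b).PosSemidef := by
    intro τ b hτ hb
    refine posSemidef_iff_dotProduct_mulVec.mpr ⟨?_, ?_⟩
    · rw [hQ]
      ext i j
      simp [Matrix.conjTranspose_apply, norm_sub_rev]
    · intro v
      rw [hQ]
      simp only [dotProduct, mulVec, Matrix.of_apply, Pi.star_apply, star_trivial]
      calc (0:ℝ) ≤ τ * ∑ i, ∑ j, v i * v j * Real.exp (-‖x i - x j‖ ^ 2 / (2 * b)) :=
            mul_nonneg hτ.le (gauss_qf_nonneg x hb v)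
        _ = ∑ i, v i * ∑ j, τ * Real.exp (-‖x i - x j‖ ^ 2 / (2 * b)) * v j := by
            rw [Finset.mul_sum]
            refine Finset.sum_congr rfl fun i _ => ?_
            rw [Finset.mul_sum, Finset.mul_sum]
            exact Finset.sum_congr rfl fun j _ => by ring
  -- Step 2: the quadratic form with the inverse matrix is nonnegative
  have hqf : ∀ τ b : ℝ, 0 < τ → 0 < b → ∀ ζ : Fin n → ℝ,
      0 ≤ ζ ⬝ᵥ (Q τ b)⁻¹.mulVec ζ := by
    intro τ b hτ hb ζ
    have h := (hQpsd τ b hτ hb).inv.dotProduct_mulVec_nonneg ζ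
    simpa using h
  -- Step 3: bounds on F
  have hFnn : ∀ τ b : ℝ, 0 ≤ F τ b := by
    intro τ b
    rw [hF]
    refine Real.iSup_nonneg fun ζ => ?_
    refine mul_nonneg (Real.exp_pos _).le (Finset.prod_nonneg fun i _ => ?_)
    exact div_nonneg (Real.exp_pos _).le (by positivity)
  have hFle : ∀ τ b : ℝ, 0 < τ → 0 < b → F τ b ≤ 1 := by
    intro τ b hτ hb
    rw [hF]
    refine Real.iSup_le (fun ζ => ?_) zero_le_one
    have h1 : Real.exp (-(1 / 2) * (ζ ⬝ᵥ (Q τ b)⁻¹.mulVec ζ)) ≤ 1 := by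
      rw [Real.exp_le_one_iff]
      have := hqf τ b hτ hb ζ
      nlinarith
    have h2 : (∏ i, Real.exp (y i * ζ i) / (1 + Real.exp (ζ i))) ≤ 1 := by
      refine Finset.prod_le_one (fun i _ => ?_) (fun i _ => ?_)
      · exact div_nonneg (Real.exp_pos _).le (by positivity)
      · rw [div_le_one (by positivity)]
        rcases hy i with h | h
        · rw [h, zero_mul, Real.exp_zero]
          nlinarith [Real.exp_pos (ζ i)]
        · rw [h, one_mul]
          nlinarith
    have h3 : 0 ≤ ∏ i, Real.exp (y i * ζ i) / (1 + Real.exp (ζ i)) :=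
      Finset.prod_nonneg fun i _ => div_nonneg (Real.exp_pos _).le (by positivity)
    exact mul_le_one₀ h1 h3 h2
  -- Step 4: the dominating function is integrable
  have hgauss : Integrable (fun q : ℝ × ℝ => c * Real.exp (-c₁ * q.1 ^ 2))
      ((volume : Measure ℝ).prod μb) := by
    have h := Integrable.mul_prod (μ := (volume : Measure ℝ)) (ν := μb)
      ((integrable_exp_neg_mul_sq hc₁).const_mul c) (integrable_const (1 : ℝ))
    simpa using h
  -- Step 5: conclude by domination
  refine Integrable.mono' hgauss.integrableOn ?_ ?_
  · have : Measurable (fun q : ℝ × ℝ => F q.1 q.2 * (c * Real.exp (-c₁ * q.1 ^ 2))) := by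
      apply hFmeas.mul
      fun_prop
    exact this.aestronglyMeasurable
  · filter_upwards [ae_restrict_mem ((measurableSet_Ioi).prod (measurableSet_Ioi))] with q hq
    obtain ⟨h1, h2⟩ := hq
    have hτ : (0:ℝ) < q.1 := h1
    have hb : (0:ℝ) < q.2 := h2
    have hcE : 0 < c * Real.exp (-c₁ * q.1 ^ 2) := by positivity
    rw [Real.norm_eq_abs, abs_mul, abs_of_nonneg (hFnn q.1 q.2), abs_of_pos hcE]
    calc F q.1 q.2 * (c * Real.exp (-c₁ * q.1 ^ 2))
        ≤ 1 * (c * Real.exp (-c₁ * q.1 ^ 2)) := by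
          exact mul_le_mul_of_nonneg_right (hFle q.1 q.2 hτ hb) hcE.le
      _ = c * Real.exp (-c₁ * q.1 ^ 2) := one_mul _
end
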